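/- If F ∈ ℂ^{n×n} is Hermitian with all eigenvalues in [−1,1], and it appears as the top-left n×n block of some unitary U ∈ U(r), then there exists a unitary U with this block whose time-energy cost max_k |arg λ_k(U)| equals arccos(λ_min(F)), where λ_min(F) is the smallest eigenvalue of F. -/

import Mathlib

open Matrix

namespace AuxTE

noncomputable section

lemma abs_arg_conj (z : ℂ) : |Complex.arg ((starRingEnd ℂ) z)| = |Complex.arg z| := by
  rw [Complex.arg_conj]
  split_ifs with h
  · rw [h]
  · rw [abs_neg]

lemma arg_exp_real {θ : ℝ} (h0 : 0 ≤ θ) (hπ : θ ≤ Real.pi) :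
    Complex.arg (Complex.exp ((θ : ℂ) * Complex.I)) = θ := by
  rw [Complex.exp_mul_I]
  exact Complex.arg_cos_add_sin_mul_I ⟨lt_of_lt_of_le (neg_lt_zero.mpr Real.pi_pos) h0, hπ⟩

lemma conj_exp_real (θ : ℝ) :
    (starRingEnd ℂ) (Complex.exp ((θ : ℂ) * Complex.I)) = Complex.exp (-(θ : ℂ) * Complex.I) := by
  rw [← Complex.exp_conj]
  congr 1
  simp [Complex.conj_ofReal]

lemma exp_mul_conj_self (θ : ℝ) :
    Complex.exp ((θ : ℂ) * Complex.I) * (starRingEnd ℂ) (Complex.exp ((θ : ℂ) * Complex.I)) = 1 := by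
  rw [conj_exp_real, ← Complex.exp_add]
  ring_nf
  exact Complex.exp_zero

variable {n m : ℕ} (lam : Fin n → ℝ)

def pp (i : Fin n) : Prop := Real.sin (Real.arccos (lam i)) ≠ 0

noncomputable instance : DecidablePred (pp lam) := fun _ => Classical.dec _

variable (e : {i // pp lam i} ↪ Fin m)

def qq (k : Fin m) : Prop := ∃ i, e i = k

noncomputable instance : DecidablePred (qq lam e) := fun _ => Classical.dec _

def G : Matrix (Fin n) (Fin m) ℂ :=
  Matrix.of fun i k => if hi : pp lam i then (if k = e ⟨i, hi⟩ then 1 else 0) else 0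

lemma G_apply_of_not (i : Fin n) (hi : ¬ pp lam i) (k : Fin m) : G lam e i k = 0 := by
  simp [G, hi]

lemma G_apply_of_pp (i : Fin n) (hi : pp lam i) (k : Fin m) :
    G lam e i k = if k = e ⟨i, hi⟩ then 1 else 0 := by
  simp [G, hi]

lemma diag_mul_G (w : Fin n → ℂ) (c : ℂ) (hw : ∀ i, pp lam i → w i = c) :
    Matrix.diagonal w * G lam e = c • G lam e := by
  ext i k
  rw [Matrix.diagonal_mul, Matrix.smul_apply, smul_eq_mul]
  by_cases hi : pp lam i
  · rw [hw i hi]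
  · rw [G_apply_of_not lam e i hi, mul_zero, mul_zero]

lemma G_mul_diag (w : Fin m → ℂ) (c : ℂ) (hw : ∀ k, qq lam e k → w k = c) :
    G lam e * Matrix.diagonal w = c • G lam e := by
  ext i k
  rw [Matrix.mul_diagonal, Matrix.smul_apply, smul_eq_mul]
  by_cases hi : pp lam i
  · rw [G_apply_of_pp lam e i hi]
    by_cases hk : k = e ⟨i, hi⟩
    · rw [if_pos hk, hw k ⟨⟨i, hi⟩, hk.symm⟩, one_mul, mul_one]
    · rw [if_neg hk, zero_mul, mul_zero]
  · rw [G_apply_of_not lam e i hi, zero_mul, mul_zero]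

lemma Gh_mul_diag (w : Fin n → ℂ) (c : ℂ) (hw : ∀ i, pp lam i → w i = c) :
    (G lam e)ᴴ * Matrix.diagonal w = c • (G lam e)ᴴ := by
  ext k i
  simp only [Matrix.mul_diagonal, Matrix.smul_apply, smul_eq_mul, Matrix.conjTranspose_apply]
  by_cases hi : pp lam i
  · rw [hw i hi, mul_comm]
  · rw [G_apply_of_not lam e i hi]; simp

lemma diag_mul_Gh (w : Fin m → ℂ) (c : ℂ) (hw : ∀ k, qq lam e k → w k = c) :
    Matrix.diagonal w * (G lam e)ᴴ = c • (G lam e)ᴴ := by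
  ext k i
  simp only [Matrix.diagonal_mul, Matrix.smul_apply, smul_eq_mul, Matrix.conjTranspose_apply]
  by_cases hi : pp lam i
  · rw [G_apply_of_pp lam e i hi]
    by_cases hk : k = e ⟨i, hi⟩
    · rw [hw k ⟨⟨i, hi⟩, hk.symm⟩]
    · rw [if_neg hk]; simp
  · rw [G_apply_of_not lam e i hi]; simp

lemma G_mul_diag_mul_Gh (w : Fin m → ℂ) :
    G lam e * Matrix.diagonal w * (G lam e)ᴴ =
      Matrix.diagonal (fun i => if hi : pp lam i then w (e ⟨i, hi⟩) else 0) := by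
  ext i j
  rw [Matrix.mul_apply]
  by_cases hi : pp lam i
  · by_cases hij : i = j
    · subst hij
      rw [Finset.sum_eq_single (e ⟨i, hi⟩)]
      · simp [Matrix.mul_diagonal, Matrix.conjTranspose_apply, G_apply_of_pp lam e i hi,
          Matrix.diagonal_apply_eq, hi]
      · intro k _ hk
        simp [Matrix.mul_diagonal, Matrix.conjTranspose_apply, G_apply_of_pp lam e i hi, hk]
      · intro hmem
        exact absurd (Finset.mem_univ _) hmem
    · rw [Matrix.diagonal_apply_ne _ hij, Finset.sum_eq_zero]
      intro k _
      rw [Matrix.mul_diagonal, Matrix.conjTranspose_apply]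
      by_cases hj : pp lam j
      · rw [G_apply_of_pp lam e i hi, G_apply_of_pp lam e j hj]
        by_cases hk : k = e ⟨i, hi⟩
        · have hk2 : k ≠ e ⟨j, hj⟩ := by
            intro hkk
            have : (⟨i, hi⟩ : {x // pp lam x}) = ⟨j, hj⟩ := e.injective (hk.symm.trans hkk)
            exact hij (congrArg Subtype.val this)
          rw [if_neg hk2]
          simp
        · rw [if_neg hk]
          simp
      · rw [G_apply_of_not lam e j hj]
        simp
  · rw [Finset.sum_eq_zero]
    · by_cases hij : i = j
      · subst hij; simp [hi]
      · rw [Matrix.diagonal_apply_ne _ hij]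
    · intro k _
      rw [Matrix.mul_diagonal, G_apply_of_not lam e i hi]
      simp

lemma G_mul_Gh :
    G lam e * (G lam e)ᴴ =
      Matrix.diagonal (fun i => if _hi : pp lam i then (1 : ℂ) else 0) := by
  have h : G lam e * Matrix.diagonal (fun _ : Fin m => (1 : ℂ)) = G lam e := by
    rw [G_mul_diag lam e (fun _ => 1) 1 (fun _ _ => rfl), one_smul]
  have h2 := G_mul_diag_mul_Gh lam e (fun _ => (1 : ℂ))
  rw [h] at h2
  exact h2

lemma Gh_mul_G :
    (G lam e)ᴴ * G lam e = Matrix.diagonal (fun k => if qq lam e k then (1 : ℂ) else 0) := by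
  ext k l
  simp only [Matrix.mul_apply, Matrix.conjTranspose_apply]
  by_cases hq : qq lam e k
  · obtain ⟨i₀, hi₀⟩ := hq
    rw [Finset.sum_eq_single i₀.1]
    · by_cases hkl : k = l
      · subst hkl
        rw [G_apply_of_pp lam e i₀.1 i₀.2, Subtype.coe_eta, hi₀]
        simp [show qq lam e k from ⟨i₀, hi₀⟩]
      · rw [Matrix.diagonal_apply_ne _ hkl,
          G_apply_of_pp lam e i₀.1 i₀.2 l, Subtype.coe_eta, hi₀]
        simp [show l ≠ k from fun hh => hkl hh.symm]
    · intro i _ hne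
      by_cases hip : pp lam i
      · have hk : k ≠ e ⟨i, hip⟩ := fun hk =>
          hne (congrArg Subtype.val (e.injective (hi₀.trans hk))).symm
        rw [G_apply_of_pp lam e i hip, if_neg hk]; simp
      · rw [G_apply_of_not lam e i hip]; simp
    · intro hmem; exact absurd (Finset.mem_univ _) hmem
  · rw [Finset.sum_eq_zero]
    · by_cases hkl : k = l
      · subst hkl; simp [hq]
      · rw [Matrix.diagonal_apply_ne _ hkl]
    · intro i _
      by_cases hip : pp lam i
      · have hk : k ≠ e ⟨i, hip⟩ := fun hk => hq ⟨⟨i, hip⟩, hk.symm⟩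
        rw [G_apply_of_pp lam e i hip, if_neg hk]; simp
      · rw [G_apply_of_not lam e i hip]; simp

def tC : ℂ := ((Real.sqrt 2)⁻¹ : ℝ)

lemma star_tC : star tC = tC := Complex.conj_ofReal _

lemma tC_mul_tC : tC * tC = 2⁻¹ := by
  have h : (Real.sqrt 2)⁻¹ * (Real.sqrt 2)⁻¹ = (2 : ℝ)⁻¹ := by
    rw [← mul_inv, Real.mul_self_sqrt (by norm_num)]
  rw [tC, ← Complex.ofReal_mul, h]
  norm_num

def alphaF : Fin n → ℂ := fun i => if pp lam i then tC else 1

def d0 : Fin m → ℂ := fun k => if qq lam e k then Complex.I * tC else 1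

def uF : Fin n → ℂ := fun i => Complex.exp ((Real.arccos (lam i) : ℂ) * Complex.I)

def d1 : Fin m → ℂ := fun k =>
  if hk : qq lam e k then Complex.exp (-(Real.arccos (lam hk.choose.1) : ℂ) * Complex.I) else 1

lemma d1_apply (i₀ : {i // pp lam i}) :
    d1 lam e (e i₀) = Complex.exp (-(Real.arccos (lam i₀.1) : ℂ) * Complex.I) := by
  have hq : qq lam e (e i₀) := ⟨i₀, rfl⟩
  simp only [d1, dif_pos hq]
  have h2 : hq.choose = i₀ := e.injective hq.choose_spec
  rw [h2]

lemma star_alphaF : star (alphaF lam) = alphaF lam := by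
  funext i
  simp only [Pi.star_apply, alphaF, apply_ite star, star_tC, star_one]

lemma star_d0 : star (d0 lam e) = fun k => if qq lam e k then -Complex.I * tC else 1 := by
  funext k
  simp only [Pi.star_apply, d0, apply_ite star, star_one, star_mul', star_tC, Complex.star_def,
    Complex.conj_I]

def Pu : Matrix (Fin n ⊕ Fin m) (Fin n ⊕ Fin m) ℂ :=
  Matrix.fromBlocks (Matrix.diagonal (alphaF lam)) (tC • G lam e)
    ((-Complex.I * tC) • (G lam e)ᴴ) (Matrix.diagonal (d0 lam e))

lemma star_negItC : star (-Complex.I * tC) = Complex.I * tC := by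
  simp [star_mul', star_tC, Complex.star_def, Complex.conj_I]

lemma Pu_mul_star : Pu lam e * (Pu lam e)ᴴ = 1 := by
  rw [Pu, Matrix.fromBlocks_conjTranspose, Matrix.conjTranspose_smul, Matrix.conjTranspose_smul,
    Matrix.conjTranspose_conjTranspose, Matrix.diagonal_conjTranspose,
    Matrix.diagonal_conjTranspose, Matrix.fromBlocks_multiply]
  rw [star_negItC, star_tC, star_alphaF, star_d0]
  have hTL : Matrix.diagonal (alphaF lam) * Matrix.diagonal (alphaF lam) +
      (tC • G lam e) * (tC • (G lam e)ᴴ) = (1 : Matrix (Fin n) (Fin n) ℂ) := by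
    rw [Matrix.diagonal_mul_diagonal, Matrix.smul_mul, Matrix.mul_smul, smul_smul, G_mul_Gh,
      tC_mul_tC, ← Matrix.diagonal_smul, Matrix.diagonal_add, ← Matrix.diagonal_one]
    refine congrArg Matrix.diagonal (funext fun i => ?_)
    by_cases hi : pp lam i
    · simp only [alphaF, if_pos hi, Pi.smul_apply, dif_pos hi, smul_eq_mul, mul_one]
      linear_combination tC_mul_tC
    · simp [alphaF, hi]
  have hTR : Matrix.diagonal (alphaF lam) * ((Complex.I * tC) • G lam e) +
      (tC • G lam e) * Matrix.diagonal (fun k => if qq lam e k then -Complex.I * tC else 1) =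
      (0 : Matrix (Fin n) (Fin m) ℂ) := by
    rw [Matrix.mul_smul, diag_mul_G lam e (alphaF lam) tC (fun i hi => if_pos hi),
      Matrix.smul_mul,
      G_mul_diag lam e _ (-Complex.I * tC) (fun k hk => if_pos hk),
      smul_smul, smul_smul, ← add_smul]
    have : Complex.I * tC * tC + tC * (-Complex.I * tC) = 0 := by ring
    rw [this, zero_smul]
  have hBL : ((-Complex.I * tC) • (G lam e)ᴴ) * Matrix.diagonal (alphaF lam) +
      Matrix.diagonal (d0 lam e) * (tC • (G lam e)ᴴ) =
      (0 : Matrix (Fin m) (Fin n) ℂ) := by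
    rw [Matrix.smul_mul, Gh_mul_diag lam e (alphaF lam) tC (fun i hi => if_pos hi),
      Matrix.mul_smul,
      diag_mul_Gh lam e (d0 lam e) (Complex.I * tC) (fun k hk => if_pos hk),
      smul_smul, smul_smul, ← add_smul]
    have : -Complex.I * tC * tC + tC * (Complex.I * tC) = 0 := by ring
    rw [this, zero_smul]
  have hBR : ((-Complex.I * tC) • (G lam e)ᴴ) * ((Complex.I * tC) • G lam e) +
      Matrix.diagonal (d0 lam e) *
        Matrix.diagonal (fun k => if qq lam e k then -Complex.I * tC else 1) =
      (1 : Matrix (Fin m) (Fin m) ℂ) := by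
    rw [Matrix.smul_mul, Matrix.mul_smul, smul_smul, Gh_mul_G, Matrix.diagonal_mul_diagonal,
      ← Matrix.diagonal_smul, Matrix.diagonal_add, ← Matrix.diagonal_one]
    refine congrArg Matrix.diagonal (funext fun k => ?_)
    by_cases hk : qq lam e k
    · simp only [d0, hk, if_true, Pi.smul_apply, smul_eq_mul]
      linear_combination (-2 * tC * tC) * Complex.I_mul_I + 2 * tC_mul_tC
    · simp [hk, d0]
  rw [hTL, hTR, hBL, hBR, Matrix.fromBlocks_one]

lemma diag_w_unitary :
    Matrix.diagonal (Sum.elim (uF lam) (d1 lam e)) *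
      (Matrix.diagonal (Sum.elim (uF lam) (d1 lam e)))ᴴ = 1 := by
  rw [Matrix.diagonal_conjTranspose, Matrix.diagonal_mul_diagonal]
  have key : (fun i => Sum.elim (uF lam) (d1 lam e) i * star (Sum.elim (uF lam) (d1 lam e)) i) =
      fun _ => (1 : ℂ) := by
    funext a
    cases a with
    | inl i =>
      simp only [Pi.star_apply, Sum.elim_inl, uF, Complex.star_def]
      exact exp_mul_conj_self _
    | inr k =>
      simp only [Pi.star_apply, Sum.elim_inr, Complex.star_def, d1]
      by_cases hk : qq lam e k
      · rw [dif_pos hk]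
        have hcast : -(Real.arccos (lam hk.choose.1) : ℂ) =
            ((-Real.arccos (lam hk.choose.1) : ℝ) : ℂ) := by push_cast; ring
        rw [hcast]
        exact exp_mul_conj_self _
      · rw [dif_neg hk]
        simp
  rw [show (fun i => Sum.elim (uF lam) (d1 lam e) i *
      star (Sum.elim (uF lam) (d1 lam e)) i) = fun _ => (1 : ℂ) from key, Matrix.diagonal_one]

lemma TL_lemma (hlam : ∀ i, -1 ≤ lam i ∧ lam i ≤ 1) :
    (Pu lam e * Matrix.diagonal (Sum.elim (uF lam) (d1 lam e)) * (Pu lam e)ᴴ).toBlocks₁₁ =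
      Matrix.diagonal (fun i => (lam i : ℂ)) := by
  rw [← Matrix.fromBlocks_diagonal, Pu, Matrix.fromBlocks_conjTranspose,
    Matrix.conjTranspose_smul, Matrix.conjTranspose_smul, Matrix.conjTranspose_conjTranspose,
    Matrix.diagonal_conjTranspose, Matrix.diagonal_conjTranspose,
    Matrix.fromBlocks_multiply, Matrix.fromBlocks_multiply]
  rw [star_negItC, star_tC, star_alphaF, star_d0, Matrix.toBlocks_fromBlocks₁₁]
  simp only [Matrix.mul_zero, Matrix.zero_mul, add_zero, zero_add]
  rw [Matrix.diagonal_mul_diagonal, Matrix.diagonal_mul_diagonal,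
    Matrix.smul_mul, Matrix.mul_smul, Matrix.smul_mul, smul_smul, G_mul_diag_mul_Gh,
    tC_mul_tC, ← Matrix.diagonal_smul, Matrix.diagonal_add]
  refine congrArg Matrix.diagonal (funext fun i => ?_)
  by_cases hi : pp lam i
  · rw [Pi.smul_apply, dif_pos hi, d1_apply lam e ⟨i, hi⟩]
    simp only [alphaF, if_pos hi, smul_eq_mul, uF]
    rw [Complex.exp_mul_I, Complex.exp_mul_I, Complex.cos_neg, Complex.sin_neg,
      ← Complex.ofReal_cos, Real.cos_arccos (hlam i).1 (hlam i).2]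
    linear_combination (((lam i : ℝ) : ℂ) + Complex.sin (Real.arccos (lam i)) * Complex.I) *
      tC_mul_tC
  · rw [Pi.smul_apply, dif_neg hi, smul_zero, add_zero]
    simp only [alphaF, if_neg hi, one_mul, mul_one, uF]
    have hsin : Real.sin (Real.arccos (lam i)) = 0 := not_not.mp hi
    rw [Complex.exp_mul_I, ← Complex.ofReal_cos, ← Complex.ofReal_sin, hsin,
      Real.cos_arccos (hlam i).1 (hlam i).2]
    simp


theorem aux_construction {n m : ℕ} (hn : 0 < n) (lam : Fin n → ℝ)
    (hlam : ∀ i, -1 ≤ lam i ∧ lam i ≤ 1) (e : {i // pp lam i} ↪ Fin m) :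
    ∃ N : Matrix (Fin n ⊕ Fin m) (Fin n ⊕ Fin m) ℂ,
      N ∈ Matrix.unitaryGroup (Fin n ⊕ Fin m) ℂ ∧
      (∀ i j, N (Sum.inl i) (Sum.inl j) = Matrix.diagonal (fun i => (lam i : ℂ)) i j) ∧
      sSup ((fun μ => |Complex.arg μ|) '' spectrum ℂ N) = Real.arccos (⨅ i, lam i) := by
  classical
  set w := Sum.elim (uF lam) (d1 lam e) with hw
  set N := Pu lam e * Matrix.diagonal w * (Pu lam e)ᴴ with hN
  have hPu : Pu lam e * (Pu lam e)ᴴ = 1 := Pu_mul_star lam e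
  have hPu' : (Pu lam e)ᴴ * Pu lam e = 1 := mul_eq_one_comm.mp hPu
  have hD : Matrix.diagonal w * (Matrix.diagonal w)ᴴ = 1 := diag_w_unitary lam e
  have hNstar : N * star N = 1 := by
    rw [Matrix.star_eq_conjTranspose, hN]
    simp only [Matrix.conjTranspose_mul, Matrix.conjTranspose_conjTranspose, Matrix.mul_assoc]
    rw [← Matrix.mul_assoc ((Pu lam e)ᴴ) (Pu lam e), hPu', Matrix.one_mul,
      ← Matrix.mul_assoc (Matrix.diagonal w) ((Matrix.diagonal w)ᴴ), hD, Matrix.one_mul, hPu]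
  have hNu : N ∈ Matrix.unitaryGroup (Fin n ⊕ Fin m) ℂ :=
    Matrix.mem_unitaryGroup_iff.mpr hNstar
  have hNblk : ∀ i j, N (Sum.inl i) (Sum.inl j) = Matrix.diagonal (fun i => (lam i : ℂ)) i j := by
    intro i j
    have := TL_lemma lam e hlam
    rw [← hw, ← hN] at this
    exact (congrFun (congrFun this i) j :)
  have hspec : spectrum ℂ N = Set.range w := by
    let Puu : (Matrix (Fin n ⊕ Fin m) (Fin n ⊕ Fin m) ℂ)ˣ :=
      ⟨Pu lam e, (Pu lam e)ᴴ, hPu, hPu'⟩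
    have hNu2 : N = (Puu : Matrix (Fin n ⊕ Fin m) (Fin n ⊕ Fin m) ℂ) * Matrix.diagonal w *
        ((Puu⁻¹ : (Matrix (Fin n ⊕ Fin m) (Fin n ⊕ Fin m) ℂ)ˣ) :
          Matrix (Fin n ⊕ Fin m) (Fin n ⊕ Fin m) ℂ) := rfl
    rw [hNu2, spectrum.units_conjugate, spectrum_diagonal]
  have : Nonempty (Fin n) := Fin.pos_iff_nonempty.mp hn
  obtain ⟨i₀, hi₀⟩ : ∃ i₀, lam i₀ = ⨅ i, lam i := exists_eq_ciInf_of_finite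
  have hbdd : BddBelow (Set.range lam) := (Set.finite_range lam).bddBelow
  have hinf_le : ∀ i, (⨅ i, lam i) ≤ lam i := fun i => ciInf_le hbdd i
  have habs : ∀ i, |Complex.arg (uF lam i)| = Real.arccos (lam i) := by
    intro i
    simp only [uF]
    rw [arg_exp_real (Real.arccos_nonneg _) (Real.arccos_le_pi _),
      abs_of_nonneg (Real.arccos_nonneg _)]
  have hle : ∀ i, Real.arccos (lam i) ≤ Real.arccos (⨅ i, lam i) := by
    intro i
    rw [Real.arccos, Real.arccos]
    have := Real.monotone_arcsin (hinf_le i)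
    linarith
  have hmem : Real.arccos (⨅ i, lam i) ∈ (fun μ => |Complex.arg μ|) '' spectrum ℂ N := by
    rw [hspec]
    refine ⟨w (Sum.inl i₀), ⟨Sum.inl i₀, rfl⟩, ?_⟩
    show |Complex.arg (w (Sum.inl i₀))| = _
    rw [hw]
    show |Complex.arg (uF lam i₀)| = _
    rw [habs i₀, hi₀]
  have hub : ∀ x ∈ (fun μ => |Complex.arg μ|) '' spectrum ℂ N, x ≤ Real.arccos (⨅ i, lam i) := by
    rintro x ⟨μ, hμ, rfl⟩
    rw [hspec] at hμ
    obtain ⟨a, rfl⟩ := hμ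
    cases a with
    | inl i =>
      show |Complex.arg (w (Sum.inl i))| ≤ _
      rw [hw]
      show |Complex.arg (uF lam i)| ≤ _
      rw [habs i]
      exact hle i
    | inr k =>
      show |Complex.arg (w (Sum.inr k))| ≤ _
      rw [hw]
      show |Complex.arg (d1 lam e k)| ≤ _
      simp only [d1]
      by_cases hk : qq lam e k
      · rw [dif_pos hk]
        have hconj : Complex.exp (-(Real.arccos (lam hk.choose.1) : ℂ) * Complex.I) =
            (starRingEnd ℂ) (Complex.exp ((Real.arccos (lam hk.choose.1) : ℂ) * Complex.I)) :=
          (conj_exp_real _).symm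
        rw [hconj, abs_arg_conj,
          arg_exp_real (Real.arccos_nonneg _) (Real.arccos_le_pi _),
          abs_of_nonneg (Real.arccos_nonneg _)]
        exact hle _
      · rw [dif_neg hk]
        simp only [Complex.arg_one, abs_zero]
        exact Real.arccos_nonneg _
  exact ⟨N, hNu, hNblk, IsGreatest.csSup_eq ⟨hmem, hub⟩⟩

lemma spectral_decomp {n : ℕ} (F : Matrix (Fin n) (Fin n) ℂ) (hF : F.IsHermitian) :
    F = (hF.eigenvectorUnitary : Matrix (Fin n) (Fin n) ℂ) *
        Matrix.diagonal (fun i => (hF.eigenvalues i : ℂ)) *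
        ((hF.eigenvectorUnitary : Matrix (Fin n) (Fin n) ℂ))ᴴ := by
  have h := hF.spectral_theorem
  rw [← Matrix.star_eq_conjTranspose]
  convert h using 1
  simp [Unitary.conjStarAlgAut_apply, Function.comp_def]

def EE {n r : ℕ} (h : n ≤ r) : Fin n ⊕ Fin (r - n) ≃ Fin r :=
  finSumFinEquiv.trans (finCongr (by omega))

lemma EE_inl {n r : ℕ} (h : n ≤ r) (j : Fin n) : EE h (Sum.inl j) = Fin.castLE h j := by
  apply Fin.ext
  simp [EE]

open scoped ComplexOrder in
lemma card_bound {n r : ℕ} (h : n ≤ r) (F : Matrix (Fin n) (Fin n) ℂ) (hF : F.IsHermitian)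
    (hEig : ∀ i, hF.eigenvalues i ∈ Set.Icc (-1 : ℝ) 1)
    (U₀ : Matrix (Fin r) (Fin r) ℂ) (hU : U₀ ∈ Matrix.unitaryGroup (Fin r) ℂ)
    (hblk : ∀ i j, U₀ (Fin.castLE h i) (Fin.castLE h j) = F i j) :
    Fintype.card {i // pp hF.eigenvalues i} ≤ r - n := by
  classical
  set lam := hF.eigenvalues with hlamdef
  let C : Matrix (Fin (r - n)) (Fin n) ℂ :=
    Matrix.of fun k j => U₀ (EE h (Sum.inr k)) (Fin.castLE h j)
  have hCC : Fᴴ * F + Cᴴ * C = 1 := by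
    have h1 : star U₀ * U₀ = 1 := Matrix.mem_unitaryGroup_iff'.mp hU
    ext i j
    have h2 := congrFun (congrFun h1 (Fin.castLE h i)) (Fin.castLE h j)
    rw [Matrix.mul_apply] at h2
    have hsum : ∑ c : Fin r, (star U₀) (Fin.castLE h i) c * U₀ c (Fin.castLE h j) =
        (Fᴴ * F) i j + (Cᴴ * C) i j := by
      rw [← Equiv.sum_comp (EE h)
        (fun c => (star U₀) (Fin.castLE h i) c * U₀ c (Fin.castLE h j)),
        Fintype.sum_sum_type]
      congr 1
      · rw [Matrix.mul_apply]
        apply Finset.sum_congr rfl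
        intro a _
        rw [EE_inl h a, Matrix.star_apply, hblk a i, hblk a j, Matrix.conjTranspose_apply]
    rw [hsum] at h2
    rw [Matrix.add_apply, h2]
    by_cases hij : i = j
    · subst hij
      simp [Matrix.one_apply]
    · rw [Matrix.one_apply_ne hij, Matrix.one_apply_ne
        (fun hc => hij (Fin.castLE_injective h hc))]
  -- rank bound
  have hrank1 : (1 - Fᴴ * F).rank ≤ r - n := by
    have hsub : Cᴴ * C = 1 - Fᴴ * F := by
      rw [← hCC]
      abel
    rw [← hsub, Matrix.rank_conjTranspose_mul_self]
    exact le_trans (Matrix.rank_le_card_height C) (by simp)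
  -- spectral decomposition of 1 - F² 
  set V : Matrix (Fin n) (Fin n) ℂ := (hF.eigenvectorUnitary : Matrix (Fin n) (Fin n) ℂ)
    with hVdef
  have hV1 : V * Vᴴ = 1 := by
    rw [← Matrix.star_eq_conjTranspose]
    exact Matrix.mem_unitaryGroup_iff.mp hF.eigenvectorUnitary.2
  have hV2 : Vᴴ * V = 1 := by
    rw [← Matrix.star_eq_conjTranspose]
    exact Matrix.mem_unitaryGroup_iff'.mp hF.eigenvectorUnitary.2
  set D : Matrix (Fin n) (Fin n) ℂ := Matrix.diagonal (fun i => (lam i : ℂ)) with hDdef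
  have hsp : F = V * D * Vᴴ := spectral_decomp F hF
  have hdecomp : 1 - Fᴴ * F =
      V * Matrix.diagonal (fun i => 1 - (lam i : ℂ) * (lam i : ℂ)) * Vᴴ := by
    rw [show Fᴴ = F from hF]
    have hsq : F * F = V * (D * D) * Vᴴ := by
      conv_lhs => rw [hsp]
      calc V * D * Vᴴ * (V * D * Vᴴ) = V * D * (Vᴴ * V) * (D * Vᴴ) := by
            simp only [Matrix.mul_assoc]
        _ = V * (D * D) * Vᴴ := by rw [hV2, Matrix.mul_one]; simp only [Matrix.mul_assoc]
    have h1m : (1 : Matrix (Fin n) (Fin n) ℂ) = V * 1 * Vᴴ := by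
      rw [Matrix.mul_one, hV1]
    rw [hsq, h1m]
    rw [← Matrix.sub_mul, ← Matrix.mul_sub]
    congr 1
    rw [hDdef, Matrix.diagonal_mul_diagonal, ← Matrix.diagonal_one, Matrix.diagonal_sub]
  have hranks : (1 - Fᴴ * F).rank =
      (Matrix.diagonal (fun i => 1 - (lam i : ℂ) * (lam i : ℂ))).rank := by
    rw [hdecomp]
    have hVdet : IsUnit V.det := Matrix.isUnit_det_of_right_inverse hV1
    have hVhdet : IsUnit (Vᴴ).det := Matrix.isUnit_det_of_left_inverse hV1
    rw [Matrix.mul_assoc, Matrix.rank_mul_eq_right_of_isUnit_det V _ hVdet,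
      Matrix.rank_mul_eq_left_of_isUnit_det (Vᴴ) _ hVhdet]
  have hcardeq : Fintype.card {i // pp lam i} =
      Fintype.card {i // (1 : ℂ) - (lam i : ℂ) * (lam i : ℂ) ≠ 0} := by
    apply Fintype.card_congr
    apply Equiv.subtypeEquivRight
    intro i
    have hx1 := (hEig i).1
    have hx2 := (hEig i).2
    have hnn : (0 : ℝ) ≤ 1 - lam i ^ 2 := by nlinarith
    have hreal : pp lam i ↔ (1 - lam i ^ 2 : ℝ) ≠ 0 := by
      rw [pp, Real.sin_arccos, ne_eq, ne_eq, Real.sqrt_eq_zero hnn]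
    rw [hreal]
    have hcast : (1 : ℂ) - (lam i : ℂ) * (lam i : ℂ) = ((1 - lam i ^ 2 : ℝ) : ℂ) := by
      push_cast
      ring
    rw [hcast]
    exact Complex.ofReal_ne_zero.symm
  rw [hcardeq, ← Matrix.rank_diagonal (fun i => (1 : ℂ) - (lam i : ℂ) * (lam i : ℂ)),
    ← hranks]
  exact hrank1

end

end AuxTE

/-- If a Hermitian `F` with eigenvalues in `[-1,1]` is the top-left `n × n`
block of some unitary of size `r`, then there is a unitary of size `r` with
this block whose time-energy cost `max_k |arg λ_k|` equals
`arccos (λ_min F)`. -/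
theorem exists_unitary_cost_eq_arccos_lambda_min {n r : ℕ} (hn : 0 < n) (h : n ≤ r)
    (F : Matrix (Fin n) (Fin n) ℂ) (hF : F.IsHermitian)
    (hEig : ∀ i, hF.eigenvalues i ∈ Set.Icc (-1 : ℝ) 1)
    (hEmbed : ∃ U : Matrix (Fin r) (Fin r) ℂ,
      U ∈ Matrix.unitaryGroup (Fin r) ℂ ∧
      ∀ i j : Fin n, U (Fin.castLE h i) (Fin.castLE h j) = F i j) :
    ∃ U : Matrix (Fin r) (Fin r) ℂ,
      U ∈ Matrix.unitaryGroup (Fin r) ℂ ∧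
      (∀ i j : Fin n, U (Fin.castLE h i) (Fin.castLE h j) = F i j) ∧
      sSup ((fun μ => |Complex.arg μ|) '' spectrum ℂ U) =
        Real.arccos (⨅ i, hF.eigenvalues i) := by
  classical
  obtain ⟨U₀, hU₀, hblk₀⟩ := hEmbed
  set lam := hF.eigenvalues with hlamdef
  have hcard := AuxTE.card_bound h F hF hEig U₀ hU₀ hblk₀
  have hemb : Nonempty ({i // AuxTE.pp lam i} ↪ Fin (r - n)) := by
    apply Function.Embedding.nonempty_of_card_le
    simpa using hcard
  obtain ⟨e⟩ := hemb
  have hlam : ∀ i, -1 ≤ lam i ∧ lam i ≤ 1 := fun i => ⟨(hEig i).1, (hEig i).2⟩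
  obtain ⟨N, hNu, hNblk, hNsup⟩ := AuxTE.aux_construction hn lam hlam e
  set V : Matrix (Fin n) (Fin n) ℂ := (hF.eigenvectorUnitary : Matrix (Fin n) (Fin n) ℂ)
    with hVdef
  have hV1 : V * Vᴴ = 1 := by
    rw [← Matrix.star_eq_conjTranspose]
    exact Matrix.mem_unitaryGroup_iff.mp hF.eigenvectorUnitary.2
  have hV2 : Vᴴ * V = 1 := by
    rw [← Matrix.star_eq_conjTranspose]
    exact Matrix.mem_unitaryGroup_iff'.mp hF.eigenvectorUnitary.2
  set W : Matrix (Fin n ⊕ Fin (r - n)) (Fin n ⊕ Fin (r - n)) ℂ :=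
    Matrix.fromBlocks V 0 0 1 with hWdef
  have hWh : Wᴴ = Matrix.fromBlocks Vᴴ 0 0 1 := by
    rw [hWdef, Matrix.fromBlocks_conjTranspose, Matrix.conjTranspose_zero,
      Matrix.conjTranspose_zero, Matrix.conjTranspose_one]
  have hW1 : W * Wᴴ = 1 := by
    rw [hWh, hWdef, Matrix.fromBlocks_multiply]
    simp only [Matrix.mul_zero, Matrix.zero_mul, Matrix.mul_one, Matrix.one_mul, add_zero,
      zero_add]
    rw [hV1, Matrix.fromBlocks_one]
  have hW2 : Wᴴ * W = 1 := by
    rw [hWh, hWdef, Matrix.fromBlocks_multiply]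
    simp only [Matrix.mul_zero, Matrix.zero_mul, Matrix.mul_one, Matrix.one_mul, add_zero,
      zero_add]
    rw [hV2, Matrix.fromBlocks_one]
  set M := W * N * Wᴴ with hMdef
  have hMmem : M ∈ Matrix.unitaryGroup (Fin n ⊕ Fin (r - n)) ℂ := by
    have hWmem : W ∈ Matrix.unitaryGroup (Fin n ⊕ Fin (r - n)) ℂ :=
      Matrix.mem_unitaryGroup_iff.mpr (by rw [Matrix.star_eq_conjTranspose]; exact hW1)
    have hWhmem : Wᴴ ∈ Matrix.unitaryGroup (Fin n ⊕ Fin (r - n)) ℂ := by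
      rw [← Matrix.star_eq_conjTranspose]
      exact Unitary.star_mem hWmem
    exact mul_mem (mul_mem hWmem hNu) hWhmem
  have hspecM : spectrum ℂ M = spectrum ℂ N := by
    let Wu : (Matrix (Fin n ⊕ Fin (r - n)) (Fin n ⊕ Fin (r - n)) ℂ)ˣ := ⟨W, Wᴴ, hW1, hW2⟩
    have hMW : M = (Wu : Matrix (Fin n ⊕ Fin (r - n)) (Fin n ⊕ Fin (r - n)) ℂ) * N *
        ((Wu⁻¹ : (Matrix (Fin n ⊕ Fin (r - n)) (Fin n ⊕ Fin (r - n)) ℂ)ˣ) :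
          Matrix (Fin n ⊕ Fin (r - n)) (Fin n ⊕ Fin (r - n)) ℂ) := rfl
    rw [hMW, spectrum.units_conjugate]
  have hMblk : ∀ i j : Fin n, M (Sum.inl i) (Sum.inl j) = F i j := by
    have h11 : N.toBlocks₁₁ = Matrix.diagonal (fun i => (lam i : ℂ)) := by
      ext i j; exact hNblk i j
    have hfb : N = Matrix.fromBlocks (Matrix.diagonal (fun i => (lam i : ℂ)))
        N.toBlocks₁₂ N.toBlocks₂₁ N.toBlocks₂₂ := by
      rw [← h11, Matrix.fromBlocks_toBlocks]
    intro i j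
    rw [hMdef]
    conv_lhs => rw [hfb, hWdef]
    rw [hWh, Matrix.fromBlocks_multiply, Matrix.fromBlocks_multiply]
    rw [Matrix.fromBlocks_apply₁₁]
    simp only [Matrix.mul_zero, Matrix.zero_mul, Matrix.mul_one, Matrix.one_mul, add_zero,
      zero_add]
    rw [show V * Matrix.diagonal (fun i => (lam i : ℂ)) * Vᴴ = F from
      (AuxTE.spectral_decomp F hF).symm]
  refine ⟨M.submatrix (AuxTE.EE h).symm (AuxTE.EE h).symm, ?_, ?_, ?_⟩
  · rw [Matrix.mem_unitaryGroup_iff', Matrix.star_eq_conjTranspose,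
      Matrix.conjTranspose_submatrix, Matrix.submatrix_mul_equiv,
      show Mᴴ * M = 1 from by
        rw [← Matrix.star_eq_conjTranspose]; exact Matrix.mem_unitaryGroup_iff'.mp hMmem]
    exact Matrix.submatrix_one_equiv (AuxTE.EE h).symm
  · intro i j
    rw [Matrix.submatrix_apply,
      show (AuxTE.EE h).symm (Fin.castLE h i) = Sum.inl i from
        (Equiv.symm_apply_eq _).mpr (AuxTE.EE_inl h i).symm,
      show (AuxTE.EE h).symm (Fin.castLE h j) = Sum.inl j from
        (Equiv.symm_apply_eq _).mpr (AuxTE.EE_inl h j).symm]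
    exact hMblk i j
  · have hs : spectrum ℂ (M.submatrix ⇑(AuxTE.EE h).symm ⇑(AuxTE.EE h).symm) =
        spectrum ℂ M := by
      have hre : M.submatrix ⇑(AuxTE.EE h).symm ⇑(AuxTE.EE h).symm =
          Matrix.reindexAlgEquiv ℂ ℂ (AuxTE.EE h) M := by
        rw [Matrix.reindexAlgEquiv_apply, Matrix.reindex_apply]
      rw [hre, AlgEquiv.spectrum_eq]
    rw [hs, hspecM]
    exact hNsup
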